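/- Let p ≥ 0 be real and let (A_N), (B_N) be real sequences with A_N/N² → A₂ ∈ ℝ and B_N/N → B₁ > 0. If −A₂/B₁² > max(p, 1), then lim_{N→∞} J_p(A_N, B_N) · e^{−f_N(1)} = 1, where f_N(k) = k A_N + k² B_N²/2. (Equivalently, J_p(A_N,B_N) ≈ e^{f_N(1)} G(−A_N/B_N − B_N) at leading order, the argument of G tending to +∞.) -/

import Mathlib

open MeasureTheory Real Filter

/-- The standard Gaussian density `φ(v) = e^{-v²/2}/√(2π)` on `ℝ`. -/
noncomputable def gaussPDF (v : ℝ) : ℝ := Real.exp (-v ^ 2 / 2) / Real.sqrt (2 * Real.pi)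

/-- `J_p(A,B) = ∫_ℝ φ(v) (1 + e^{A+Bv})^p log(1 + e^{A+Bv}) dv`. -/
noncomputable def Jint (p A B : ℝ) : ℝ :=
  ∫ v : ℝ, gaussPDF v * (1 + Real.exp (A + B * v)) ^ p * Real.log (1 + Real.exp (A + B * v))

/-- `f_N(k) = k A_N + k² B_N²/2`. -/
noncomputable def fExp (A B k : ℝ) : ℝ := k * A + k ^ 2 * B ^ 2 / 2

open Set

section Auxiliary

/-- The Gaussian measure of `(-∞, u]`. -/
noncomputable def G (u : ℝ) : ℝ := ∫ v in Iic u, gaussPDF v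



lemma sqrt_two_pi_pos : 0 < Real.sqrt (2 * Real.pi) :=
  Real.sqrt_pos.2 (by positivity)

lemma one_le_sqrt_two_pi : 1 ≤ Real.sqrt (2 * Real.pi) := by
  rw [show (1:ℝ) = Real.sqrt 1 by simp]
  exact Real.sqrt_le_sqrt (by nlinarith [Real.pi_gt_three])

lemma gaussPDF_pos (v : ℝ) : 0 < gaussPDF v :=
  div_pos (Real.exp_pos _) sqrt_two_pi_pos

lemma gaussPDF_nonneg (v : ℝ) : 0 ≤ gaussPDF v := (gaussPDF_pos v).le

lemma continuous_gaussPDF : Continuous gaussPDF := by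
  unfold gaussPDF
  fun_prop

lemma integrable_gaussPDF : Integrable gaussPDF := by
  have h : Integrable (fun v : ℝ => Real.exp (-(1/2) * v ^ 2)) :=
    integrable_exp_neg_mul_sq (by norm_num)
  have := (h.div_const (Real.sqrt (2 * Real.pi)))
  refine this.congr (Eventually.of_forall fun v => ?_)
  unfold gaussPDF
  ring_nf

lemma integral_gaussPDF : ∫ v : ℝ, gaussPDF v = 1 := by
  unfold gaussPDF
  rw [integral_div]
  have h : ∫ v : ℝ, Real.exp (-v ^ 2 / 2) = ∫ v : ℝ, Real.exp (-(1/2) * v ^ 2) := by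
    congr 1; ext v; ring_nf
  rw [h, integral_gaussian]
  rw [div_eq_one_iff_eq (ne_of_gt sqrt_two_pi_pos)]
  congr 1
  ring



/-- Gaussian CDF-ish -/

lemma G_nonneg (u : ℝ) : 0 ≤ G u :=
  setIntegral_nonneg measurableSet_Iic fun v _ => gaussPDF_nonneg v

lemma G_le_one (u : ℝ) : G u ≤ 1 := by
  rw [← integral_gaussPDF]
  exact setIntegral_le_integral integrable_gaussPDF
    (Eventually.of_forall fun v => gaussPDF_nonneg v)

lemma complete_square (k a b v : ℝ) :
    gaussPDF v * Real.exp (k * (a + b * v)) =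
      Real.exp (fExp a b k) * gaussPDF (v - k * b) := by
  unfold gaussPDF fExp
  rw [div_mul_eq_mul_div, ← Real.exp_add, mul_div_assoc', ← Real.exp_add]
  congr 2
  ring

lemma integrable_gauss_exp (k a b : ℝ) :
    Integrable (fun v => gaussPDF v * Real.exp (k * (a + b * v))) := by
  have : Integrable (fun v => Real.exp (fExp a b k) * gaussPDF (v - k * b)) :=
    (integrable_gaussPDF.comp_sub_right (k * b)).const_mul _
  exact this.congr (Eventually.of_forall fun v => (complete_square k a b v).symm)

lemma shift_Iic (f : ℝ → ℝ) (T m : ℝ) :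
    ∫ v in Iic T, f (v - m) = ∫ v in Iic (T - m), f v := by
  have h₁ : MeasurePreserving (fun x : ℝ => x - m) volume volume := by
    simpa [sub_eq_add_neg] using measurePreserving_add_right (volume : Measure ℝ) (-m)
  have h₂ : MeasurableEmbedding (fun x : ℝ => x - m) :=
    (Homeomorph.subRight m).isClosedEmbedding.measurableEmbedding
  have := h₁.setIntegral_preimage_emb h₂ f (Iic (T - m))
  rw [show (fun x : ℝ => x - m) ⁻¹' Iic (T - m) = Iic T by
    ext x; simp [sub_le_sub_iff_right]] at this
  exact this

lemma shift_Ioi (f : ℝ → ℝ) (T m : ℝ) :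
    ∫ v in Ioi T, f (v - m) = ∫ v in Ioi (T - m), f v := by
  have h₁ : MeasurePreserving (fun x : ℝ => x - m) volume volume := by
    simpa [sub_eq_add_neg] using measurePreserving_add_right (volume : Measure ℝ) (-m)
  have h₂ : MeasurableEmbedding (fun x : ℝ => x - m) :=
    (Homeomorph.subRight m).isClosedEmbedding.measurableEmbedding
  have := h₁.setIntegral_preimage_emb h₂ f (Ioi (T - m))
  rw [show (fun x : ℝ => x - m) ⁻¹' Ioi (T - m) = Ioi T by
    ext x; simp [sub_lt_sub_iff_right]] at this
  exact this

lemma mgf_Iic (k a b T : ℝ) :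
    ∫ v in Iic T, gaussPDF v * Real.exp (k * (a + b * v)) =
      Real.exp (fExp a b k) * G (T - k * b) := by
  simp_rw [complete_square k a b]
  rw [MeasureTheory.integral_const_mul, shift_Iic gaussPDF T (k * b)]
  rfl

lemma mgf_Ioi (k a b T : ℝ) :
    ∫ v in Ioi T, gaussPDF v * Real.exp (k * (a + b * v)) =
      Real.exp (fExp a b k) * ∫ v in Ioi (T - k * b), gaussPDF v := by
  simp_rw [complete_square k a b]
  rw [MeasureTheory.integral_const_mul, shift_Ioi gaussPDF T (k * b)]



lemma integrableOn_exp_mul_Iic' {c : ℝ} (hc : 1 ≤ c) (u : ℝ) :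
    IntegrableOn (fun w => Real.exp (c * w)) (Iic u) := by
  refine Integrable.mono' ((integrableOn_exp_Iic u).const_mul (Real.exp ((c - 1) * u)))
    ((Real.continuous_exp.comp (continuous_const.mul continuous_id)).aestronglyMeasurable)
    (ae_restrict_of_forall_mem measurableSet_Iic fun w hw => ?_)
  rw [Real.norm_eq_abs, abs_of_pos (Real.exp_pos _), ← Real.exp_add]
  apply Real.exp_le_exp.2
  have : (c - 1) * w ≤ (c - 1) * u := mul_le_mul_of_nonneg_left hw (by linarith)
  linarith

lemma integral_exp_mul_Iic' {c : ℝ} (hc : 0 < c) (u : ℝ)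
    (hi : IntegrableOn (fun w => Real.exp (c * w)) (Iic u)) :
    ∫ w in Iic u, Real.exp (c * w) = Real.exp (c * u) / c := by
  have h : ∫ w in Iic u, Real.exp (c * w) = Real.exp (c * u) / c - 0 := by
    refine integral_Iic_of_hasDerivAt_of_tendsto' (f := fun w => Real.exp (c * w) / c)
      (fun x _ => ?_) hi ?_
    · have h1 : HasDerivAt (fun w : ℝ => c * w) c x := by
        simpa using (hasDerivAt_id x).const_mul c
      have := (h1.exp).div_const c
      simpa [mul_div_assoc, mul_comm, mul_div_cancel_left₀ _ (ne_of_gt hc)] using this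
    · have h2 : Tendsto (fun w : ℝ => c * w) atBot atBot :=
        (tendsto_const_mul_atBot_of_pos hc).2 tendsto_id
      have := (Real.tendsto_exp_atBot.comp h2).div_const c
      simpa using this
  simpa using h

lemma gauss_tail_Iic {u : ℝ} (hu : u ≤ -1) : G u ≤ Real.exp (-u ^ 2 / 2) := by
  have hc : (1:ℝ) ≤ -u := by linarith
  have hc0 : (0:ℝ) < -u := by linarith
  have hint := integrableOn_exp_mul_Iic' hc u
  have step1 : G u ≤ ∫ w in Iic u, Real.exp (u ^ 2 / 2) / Real.sqrt (2 * Real.pi)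
      * Real.exp (-u * w) := by
    refine setIntegral_mono_on integrable_gaussPDF.integrableOn
      ?_ measurableSet_Iic fun w _ => ?_
    · exact hint.const_mul _
    · unfold gaussPDF
      rw [div_mul_eq_mul_div, div_le_div_iff_of_pos_right sqrt_two_pi_pos, ← Real.exp_add]
      apply Real.exp_le_exp.2
      nlinarith [sq_nonneg (w - u)]
  have step2 : ∫ w in Iic u, Real.exp (u ^ 2 / 2) / Real.sqrt (2 * Real.pi)
      * Real.exp (-u * w) = Real.exp (u ^ 2 / 2) / Real.sqrt (2 * Real.pi)
      * (Real.exp (-u * u) / (-u)) := by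
    rw [MeasureTheory.integral_const_mul, integral_exp_mul_Iic' hc0 u hint]
  rw [step2] at step1
  refine le_trans step1 ?_
  have key : Real.exp (u ^ 2 / 2) / Real.sqrt (2 * Real.pi) * (Real.exp (-u * u) / -u)
      = Real.exp (u ^ 2 / 2) * Real.exp (-u * u) / (Real.sqrt (2 * Real.pi) * -u) := by
    ring
  rw [key, ← Real.exp_add, show u ^ 2 / 2 + -u * u = -u ^ 2 / 2 by ring]
  apply div_le_self (Real.exp_pos _).le
  nlinarith [one_le_sqrt_two_pi]

lemma gaussPDF_neg (v : ℝ) : gaussPDF (-v) = gaussPDF v := by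
  unfold gaussPDF; rw [neg_pow]; ring_nf

lemma gauss_tail_Ioi {u : ℝ} (hu : 1 ≤ u) :
    ∫ v in Ioi u, gaussPDF v ≤ Real.exp (-u ^ 2 / 2) := by
  have h0 : ∫ v in Ioi u, gaussPDF v = ∫ v in Ioi u, gaussPDF (-v) := by
    simp_rw [gaussPDF_neg]
  rw [h0, integral_comp_neg_Ioi]
  have := gauss_tail_Iic (u := -u) (by linarith)
  simpa [G] using this

lemma G_ge {u : ℝ} (hu : 1 ≤ u) : 1 - Real.exp (-u ^ 2 / 2) ≤ G u := by
  have hsplit : G u + ∫ v in Ioi u, gaussPDF v = 1 := by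
    rw [← integral_gaussPDF]
    exact intervalIntegral.integral_Iic_add_Ioi integrable_gaussPDF.integrableOn integrable_gaussPDF.integrableOn
  have := gauss_tail_Ioi hu
  linarith


-- elementary pointwise bounds
lemma log_one_add_le {t : ℝ} (ht : 0 ≤ t) : Real.log (1 + t) ≤ t := by
  have := Real.log_le_sub_one_of_pos (x := 1 + t) (by linarith)
  linarith

lemma log_one_add_ge {t : ℝ} (ht : 0 ≤ t) : t - t ^ 2 ≤ Real.log (1 + t) := by
  have h1 : (0:ℝ) < 1 + t := by linarith
  have h := Real.one_sub_inv_le_log_of_pos h1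
  have h2 : 1 - (1 + t)⁻¹ = t / (1 + t) := by field_simp; ring
  have h3 : t - t ^ 2 ≤ t / (1 + t) := by
    rw [le_div_iff₀ h1]
    nlinarith
  linarith [h2 ▸ h]

lemma log_one_add_nonneg {t : ℝ} (ht : 0 ≤ t) : 0 ≤ Real.log (1 + t) :=
  Real.log_nonneg (by linarith)

lemma rpow_eq_exp {t p : ℝ} (ht : 0 ≤ t) : (1 + t) ^ p = Real.exp (p * Real.log (1 + t)) := by
  rw [Real.rpow_def_of_pos (by linarith), mul_comm]

lemma one_le_rpow_one_add {t p : ℝ} (ht : 0 ≤ t) (hp : 0 ≤ p) : 1 ≤ (1 + t) ^ p := by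
  rw [rpow_eq_exp ht]
  calc (1:ℝ) = Real.exp 0 := by simp
    _ ≤ _ := Real.exp_le_exp.2 (mul_nonneg hp (log_one_add_nonneg ht))

lemma exp_sub_one_le {s : ℝ} (hs : 0 ≤ s) : Real.exp s - 1 ≤ s * Real.exp s := by
  have h := Real.add_one_le_exp (-s)
  have he : Real.exp (-s) * Real.exp s = 1 := by rw [← Real.exp_add]; simp
  nlinarith [Real.exp_pos s, Real.exp_pos (-s)]

lemma rpow_one_add_le_small {t p : ℝ} (ht : 0 ≤ t) (ht1 : t ≤ 1) (hp : 0 ≤ p) :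
    (1 + t) ^ p ≤ 1 + p * Real.exp p * t := by
  rw [rpow_eq_exp ht]
  have h1 : p * Real.log (1 + t) ≤ p * t := mul_le_mul_of_nonneg_left (log_one_add_le ht) hp
  have h2 : Real.exp (p * Real.log (1 + t)) ≤ Real.exp (p * t) := Real.exp_le_exp.2 h1
  have h3 : Real.exp (p * t) - 1 ≤ (p * t) * Real.exp (p * t) :=
    exp_sub_one_le (by positivity)
  have h4 : Real.exp (p * t) ≤ Real.exp p := Real.exp_le_exp.2 (by nlinarith)
  nlinarith [Real.exp_pos (p * t), mul_nonneg hp ht]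

lemma rpow_one_add_le_big {x p : ℝ} (hx : 0 ≤ x) (hp : 0 ≤ p) :
    (1 + Real.exp x) ^ p ≤ Real.exp (p * Real.log 2 + p * x) := by
  rw [rpow_eq_exp (Real.exp_pos x).le]
  apply Real.exp_le_exp.2
  rw [← mul_add]
  apply mul_le_mul_of_nonneg_left ?_ hp
  have h1 : 1 + Real.exp x ≤ 2 * Real.exp x := by
    have := Real.one_le_exp hx; linarith
  calc Real.log (1 + Real.exp x) ≤ Real.log (2 * Real.exp x) :=
        Real.log_le_log (by positivity) h1
    _ = Real.log 2 + x := by rw [Real.log_mul (by norm_num) (Real.exp_ne_zero x), Real.log_exp]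

lemma log_one_add_exp_le_big {x : ℝ} (hx : 0 ≤ x) :
    Real.log (1 + Real.exp x) ≤ Real.log 2 + x := by
  have h1 : 1 + Real.exp x ≤ 2 * Real.exp x := by
    have := Real.one_le_exp hx; linarith
  calc Real.log (1 + Real.exp x) ≤ Real.log (2 * Real.exp x) :=
        Real.log_le_log (by positivity) h1
    _ = Real.log 2 + x := by rw [Real.log_mul (by norm_num) (Real.exp_ne_zero x), Real.log_exp]

lemma linear_le_exp {x d : ℝ} (hx : 0 ≤ x) (hd : 0 < d) :
    Real.log 2 + x ≤ (Real.log 2 + 1 / d) * Real.exp (d * x) := by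
  have h1 : (1:ℝ) ≤ Real.exp (d * x) := Real.one_le_exp (by positivity)
  have h2 : d * x ≤ Real.exp (d * x) := by
    linarith [Real.add_one_le_exp (d * x)]
  have h3 : x ≤ Real.exp (d * x) / d := by
    rw [le_div_iff₀ hd]; linarith [h2]
  have hl2 : (0:ℝ) ≤ Real.log 2 := Real.log_nonneg (by norm_num)
  have := mul_le_mul_of_nonneg_left h1 hl2
  rw [div_eq_mul_inv] at h3 ⊢
  nlinarith



section main
variable {p a b : ℝ}

/-- the integrand of `Jint`. -/
noncomputable def hInt (p a b : ℝ) (v : ℝ) : ℝ :=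
  gaussPDF v * (1 + Real.exp (a + b * v)) ^ p * Real.log (1 + Real.exp (a + b * v))

lemma hInt_nonneg (hp : 0 ≤ p) (v : ℝ) : 0 ≤ hInt p a b v := by
  unfold hInt
  have h1 := gaussPDF_nonneg v
  have h2 : (0:ℝ) ≤ (1 + Real.exp (a + b * v)) ^ p :=
    le_trans zero_le_one (one_le_rpow_one_add (Real.exp_pos _).le hp)
  have h3 := log_one_add_nonneg (t := Real.exp (a + b * v)) (Real.exp_pos _).le
  positivity

lemma continuous_hInt (p a b : ℝ) : Continuous (hInt p a b) := by
  unfold hInt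
  have hc : Continuous fun v : ℝ => 1 + Real.exp (a + b * v) := by fun_prop
  have h1 : Continuous fun v : ℝ => (1 + Real.exp (a + b * v)) ^ p :=
    hc.rpow_const fun v => Or.inl (by positivity)
  have h2 : Continuous fun v : ℝ => Real.log (1 + Real.exp (a + b * v)) :=
    hc.log fun v => by positivity
  exact (continuous_gaussPDF.mul h1).mul h2

lemma hInt_le_pos (hp : 0 ≤ p) {d : ℝ} (hd : 0 < d) {v : ℝ} (hx : 0 ≤ a + b * v) :
    hInt p a b v ≤ (Real.exp (p * Real.log 2) * (Real.log 2 + 1 / d)) *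
      (gaussPDF v * Real.exp ((p + d) * (a + b * v))) := by
  set x := a + b * v with hxdef
  have h1 : (1 + Real.exp x) ^ p ≤ Real.exp (p * Real.log 2 + p * x) :=
    rpow_one_add_le_big hx hp
  have h2 : Real.log (1 + Real.exp x) ≤ (Real.log 2 + 1 / d) * Real.exp (d * x) :=
    le_trans (log_one_add_exp_le_big hx) (linear_le_exp hx hd)
  have h3 : (0:ℝ) ≤ (1 + Real.exp x) ^ p :=
    le_trans zero_le_one (one_le_rpow_one_add (Real.exp_pos _).le hp)
  have h4 := log_one_add_nonneg (t := Real.exp x) (Real.exp_pos _).le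
  have h5 := gaussPDF_nonneg v
  unfold hInt
  rw [← hxdef]
  calc gaussPDF v * (1 + Real.exp x) ^ p * Real.log (1 + Real.exp x)
      ≤ gaussPDF v * Real.exp (p * Real.log 2 + p * x) *
        ((Real.log 2 + 1 / d) * Real.exp (d * x)) := by
        apply mul_le_mul
        · exact mul_le_mul_of_nonneg_left h1 h5
        · exact le_trans (log_one_add_exp_le_big hx) (linear_le_exp hx hd)
        · exact h4
        · positivity
    _ = (Real.exp (p * Real.log 2) * (Real.log 2 + 1 / d)) *
        (gaussPDF v * Real.exp ((p + d) * x)) := by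
        rw [Real.exp_add, show (p + d) * x = p * x + d * x from by ring, Real.exp_add]
        ring

lemma integrable_hInt (hp : 0 ≤ p) : Integrable (hInt p a b) := by
  set Cp := Real.exp (p * Real.log 2) * (Real.log 2 + 1) with hCp
  have hl2 : (0:ℝ) ≤ Real.log 2 := Real.log_nonneg (by norm_num)
  have hCp0 : 0 ≤ Cp := by positivity
  have hbound : ∀ v, ‖hInt p a b v‖ ≤
      Cp * (gaussPDF v * Real.exp ((p+1) * (a + b * v)))
      + Cp * (gaussPDF v * Real.exp ((-(p+1)) * (a + b * v))) := by
    intro v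
    rw [Real.norm_eq_abs, abs_of_nonneg (hInt_nonneg hp v)]
    have h5 := gaussPDF_nonneg v
    have hterm1 : (0:ℝ) ≤ Cp * (gaussPDF v * Real.exp ((p+1) * (a + b * v))) := by positivity
    have hterm2 : (0:ℝ) ≤ Cp * (gaussPDF v * Real.exp ((-(p+1)) * (a + b * v))) := by positivity
    rcases le_or_gt 0 (a + b * v) with hx | hx
    · have h := hInt_le_pos hp one_pos (v := v) hx
      have h' : hInt p a b v ≤ Cp * (gaussPDF v * Real.exp ((p+1) * (a + b * v))) := by
        rw [hCp]
        calc hInt p a b v ≤ (Real.exp (p * Real.log 2) * (Real.log 2 + 1/1)) *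
            (gaussPDF v * Real.exp ((p + 1) * (a + b * v))) := h
          _ = Real.exp (p * Real.log 2) * (Real.log 2 + 1) *
            (gaussPDF v * Real.exp ((p+1) * (a + b * v))) := by norm_num
      linarith
    · have ht1 : Real.exp (a + b * v) ≤ 1 := Real.exp_le_one_iff.2 hx.le
      have h1 : (1 + Real.exp (a + b * v)) ^ p ≤ Real.exp (p * Real.log 2) := by
        rw [rpow_eq_exp (Real.exp_pos _).le]
        apply Real.exp_le_exp.2
        apply mul_le_mul_of_nonneg_left ?_ hp
        exact Real.log_le_log (by positivity) (by linarith)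
      have h2 : Real.log (1 + Real.exp (a + b * v)) ≤
          (Real.log 2 + 1) * Real.exp ((-(p+1)) * (a + b * v)) := by
        have he1 : (1:ℝ) ≤ Real.exp ((-(p+1)) * (a + b * v)) := by
          apply Real.one_le_exp
          nlinarith
        have h3 : Real.log (1 + Real.exp (a + b * v)) ≤ Real.log 2 :=
          Real.log_le_log (by positivity) (by linarith)
        nlinarith
      have h3 : (0:ℝ) ≤ (1 + Real.exp (a + b * v)) ^ p :=
        le_trans zero_le_one (one_le_rpow_one_add (Real.exp_pos _).le hp)
      have h4 := log_one_add_nonneg (t := Real.exp (a + b * v)) (Real.exp_pos _).le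
      have h' : hInt p a b v ≤ Cp * (gaussPDF v * Real.exp ((-(p+1)) * (a + b * v))) := by
        unfold hInt
        calc gaussPDF v * (1 + Real.exp (a + b * v)) ^ p * Real.log (1 + Real.exp (a + b * v))
            ≤ gaussPDF v * Real.exp (p * Real.log 2) *
              ((Real.log 2 + 1) * Real.exp ((-(p+1)) * (a + b * v))) := by
              apply mul_le_mul (mul_le_mul_of_nonneg_left h1 h5) h2 h4 (by positivity)
          _ = Cp * (gaussPDF v * Real.exp ((-(p+1)) * (a + b * v))) := by rw [hCp]; ring
      linarith
  refine Integrable.mono'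
    (((integrable_gauss_exp (p+1) a b).const_mul Cp).add
      ((integrable_gauss_exp (-(p+1)) a b).const_mul Cp))
    (continuous_hInt p a b).aestronglyMeasurable
    (Eventually.of_forall hbound)


lemma Jint_eq_integral (p a b : ℝ) : Jint p a b = ∫ v, hInt p a b v := rfl

lemma hInt_le_Iic (hp : 0 ≤ p) (hb : 0 < b) {T v : ℝ} (hbT : b * T = -a) (hv : v ≤ T) :
    hInt p a b v ≤ gaussPDF v * Real.exp (1 * (a + b * v))
      + (p * Real.exp p) * (gaussPDF v * Real.exp (2 * (a + b * v))) := by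
  have hx : a + b * v ≤ 0 := by nlinarith
  have ht1 : Real.exp (a + b * v) ≤ 1 := Real.exp_le_one_iff.2 hx
  have ht0 : (0:ℝ) < Real.exp (a + b * v) := Real.exp_pos _
  have h1 : (1 + Real.exp (a + b * v)) ^ p ≤ 1 + p * Real.exp p * Real.exp (a + b * v) :=
    rpow_one_add_le_small ht0.le ht1 hp
  have h2 : Real.log (1 + Real.exp (a + b * v)) ≤ Real.exp (a + b * v) :=
    log_one_add_le ht0.le
  have h4 := log_one_add_nonneg (t := Real.exp (a + b * v)) ht0.le
  have h5 := gaussPDF_nonneg v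
  have h3 : (0:ℝ) ≤ (1 + Real.exp (a + b * v)) ^ p :=
    le_trans zero_le_one (one_le_rpow_one_add ht0.le hp)
  have key : hInt p a b v ≤ gaussPDF v * (1 + p * Real.exp p * Real.exp (a + b * v)) *
      Real.exp (a + b * v) := by
    unfold hInt
    apply mul_le_mul (mul_le_mul_of_nonneg_left h1 h5) h2 h4 (by positivity)
  refine le_trans key (le_of_eq ?_)
  rw [show (2:ℝ) * (a + b * v) = (a + b * v) + (a + b * v) from by ring, one_mul, Real.exp_add]
  ring_nf
  rw [show b * v * 2 + a * 2 = (b * v + b * v) + (a + a) from by ring,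
    Real.exp_add, Real.exp_add, Real.exp_add]
  ring

lemma hInt_ge_Iic (hp : 0 ≤ p) (hb : 0 < b) {T v : ℝ} (hbT : b * T = -a) (hv : v ≤ T) :
    gaussPDF v * Real.exp (1 * (a + b * v))
      - gaussPDF v * Real.exp (2 * (a + b * v)) ≤ hInt p a b v := by
  have hx : a + b * v ≤ 0 := by nlinarith
  have ht1 : Real.exp (a + b * v) ≤ 1 := Real.exp_le_one_iff.2 hx
  have ht0 : (0:ℝ) < Real.exp (a + b * v) := Real.exp_pos _
  have h1 : (1:ℝ) ≤ (1 + Real.exp (a + b * v)) ^ p := one_le_rpow_one_add ht0.le hp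
  have h2 : Real.exp (a + b * v) - Real.exp (a + b * v) ^ 2 ≤
      Real.log (1 + Real.exp (a + b * v)) := log_one_add_ge ht0.le
  have h4 := log_one_add_nonneg (t := Real.exp (a + b * v)) ht0.le
  have h5 := gaussPDF_nonneg v
  have key : gaussPDF v * 1 * (Real.exp (a + b * v) - Real.exp (a + b * v) ^ 2) ≤
      hInt p a b v := by
    unfold hInt
    apply mul_le_mul (mul_le_mul_of_nonneg_left h1 h5) ?_ ?_ ?_
    · exact h2
    · nlinarith
    · positivity
  refine le_trans (le_of_eq ?_) key
  rw [show (2:ℝ) * (a + b * v) = (a + b * v) + (a + b * v) from by ring, one_mul, Real.exp_add]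
  ring_nf
  rw [show b * v * 2 + a * 2 = (b * v + b * v) + (a + a) from by ring,
    Real.exp_add, Real.exp_add, Real.exp_add]
  ring

lemma exp_tail_eq (k a b T : ℝ) (hbT : b * T = -a) :
    Real.exp (fExp a b k) * Real.exp (-(T - k * b) ^ 2 / 2) = Real.exp (-T ^ 2 / 2) := by
  rw [← Real.exp_add]
  congr 1
  unfold fExp
  linear_combination k * hbT

lemma Jint_le_main (p a b d : ℝ) (hp : 0 ≤ p) (hd : 0 < d) (hb : 0 < b)
    (hT : 1 ≤ -a / b - (p + d) * b) :
    Jint p a b ≤ Real.exp (fExp a b 1)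
      + (p * Real.exp p) * (Real.exp (fExp a b 2) * G (-a / b - 2 * b))
      + (Real.exp (p * Real.log 2) * (Real.log 2 + 1 / d)) *
          Real.exp (-(-a / b) ^ 2 / 2) := by
  set T := -a / b with hTdef
  have hbT : b * T = -a := by rw [hTdef]; field_simp
  have hint := integrable_hInt (p := p) (a := a) (b := b) hp
  have hsplit : Jint p a b = (∫ v in Iic T, hInt p a b v) + ∫ v in Ioi T, hInt p a b v := by
    rw [Jint_eq_integral]
    exact (intervalIntegral.integral_Iic_add_Ioi hint.integrableOn hint.integrableOn).symm
  rw [hsplit]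
  have hI : (∫ v in Iic T, hInt p a b v) ≤
      Real.exp (fExp a b 1) + (p * Real.exp p) * (Real.exp (fExp a b 2) * G (T - 2 * b)) := by
    have hmono : (∫ v in Iic T, hInt p a b v) ≤
        ∫ v in Iic T, (gaussPDF v * Real.exp (1 * (a + b * v))
          + (p * Real.exp p) * (gaussPDF v * Real.exp (2 * (a + b * v)))) := by
      refine setIntegral_mono_on hint.integrableOn
        (((integrable_gauss_exp 1 a b).add
          ((integrable_gauss_exp 2 a b).const_mul _)).integrableOn)
        measurableSet_Iic fun v hv => hInt_le_Iic hp hb hbT hv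
    refine le_trans hmono ?_
    rw [integral_add (integrable_gauss_exp 1 a b).integrableOn
      (((integrable_gauss_exp 2 a b).const_mul _).integrableOn),
      MeasureTheory.integral_const_mul, mgf_Iic, mgf_Iic]
    have h1 : Real.exp (fExp a b 1) * G (T - 1 * b) ≤ Real.exp (fExp a b 1) := by
      have := G_le_one (T - 1 * b)
      nlinarith [Real.exp_pos (fExp a b 1), G_nonneg (T - 1 * b)]
    gcongr
  have hII : (∫ v in Ioi T, hInt p a b v) ≤
      (Real.exp (p * Real.log 2) * (Real.log 2 + 1 / d)) * Real.exp (-T ^ 2 / 2) := by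
    set Cd := Real.exp (p * Real.log 2) * (Real.log 2 + 1 / d) with hCd
    have hCd0 : 0 ≤ Cd := by
      have : (0:ℝ) ≤ Real.log 2 := Real.log_nonneg (by norm_num)
      positivity
    have hmono : (∫ v in Ioi T, hInt p a b v) ≤
        ∫ v in Ioi T, Cd * (gaussPDF v * Real.exp ((p + d) * (a + b * v))) := by
      refine setIntegral_mono_on hint.integrableOn
        (((integrable_gauss_exp (p + d) a b).const_mul _).integrableOn)
        measurableSet_Ioi fun v hv => ?_
      exact hInt_le_pos hp hd (by nlinarith [mem_Ioi.1 hv])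
    refine le_trans hmono ?_
    rw [MeasureTheory.integral_const_mul, mgf_Ioi]
    have htail : (∫ v in Ioi (T - (p + d) * b), gaussPDF v) ≤
        Real.exp (-(T - (p + d) * b) ^ 2 / 2) := gauss_tail_Ioi hT
    calc Cd * (Real.exp (fExp a b (p + d)) * ∫ v in Ioi (T - (p + d) * b), gaussPDF v)
        ≤ Cd * (Real.exp (fExp a b (p + d)) * Real.exp (-(T - (p + d) * b) ^ 2 / 2)) := by
          gcongr
      _ = Cd * Real.exp (-T ^ 2 / 2) := by rw [exp_tail_eq _ _ _ _ hbT]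
  linarith
 
lemma Jint_ge_main (p a b : ℝ) (hp : 0 ≤ p) (hb : 0 < b) :
    Real.exp (fExp a b 1) * G (-a / b - 1 * b)
      - Real.exp (fExp a b 2) * G (-a / b - 2 * b) ≤ Jint p a b := by
  set T := -a / b with hTdef
  have hbT : b * T = -a := by rw [hTdef]; field_simp
  have hint := integrable_hInt (p := p) (a := a) (b := b) hp
  have hsplit : Jint p a b = (∫ v in Iic T, hInt p a b v) + ∫ v in Ioi T, hInt p a b v := by
    rw [Jint_eq_integral]
    exact (intervalIntegral.integral_Iic_add_Ioi hint.integrableOn hint.integrableOn).symm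
  have hII : 0 ≤ ∫ v in Ioi T, hInt p a b v :=
    setIntegral_nonneg measurableSet_Ioi fun v _ => hInt_nonneg hp v
  have hI : Real.exp (fExp a b 1) * G (T - 1 * b) - Real.exp (fExp a b 2) * G (T - 2 * b) ≤
      ∫ v in Iic T, hInt p a b v := by
    have hmono : (∫ v in Iic T, (gaussPDF v * Real.exp (1 * (a + b * v))
        - gaussPDF v * Real.exp (2 * (a + b * v)))) ≤ ∫ v in Iic T, hInt p a b v := by
      refine setIntegral_mono_on
        (((integrable_gauss_exp 1 a b).sub (integrable_gauss_exp 2 a b)).integrableOn)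
        hint.integrableOn measurableSet_Iic fun v hv => hInt_ge_Iic hp hb hbT hv
    refine le_trans (le_of_eq ?_) hmono
    rw [integral_sub (integrable_gauss_exp 1 a b).integrableOn
      (integrable_gauss_exp 2 a b).integrableOn, mgf_Iic, mgf_Iic]
  linarith


end main

lemma tendsto_atTop_of_div_nat {f : ℕ → ℝ} {L : ℝ}
    (hf : Tendsto (fun N : ℕ => f N / N) atTop (nhds L)) (hL : 0 < L) :
    Tendsto f atTop atTop := by
  have h1 : ∀ᶠ N : ℕ in atTop, L / 2 < f N / N := hf.eventually (lt_mem_nhds (by linarith))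
  have h2 : ∀ᶠ N : ℕ in atTop, (L / 2) * N ≤ f N := by
    filter_upwards [h1, eventually_ge_atTop 1] with N hN hN1
    have hNpos : (0:ℝ) < N := by exact_mod_cast hN1
    rw [lt_div_iff₀ hNpos] at hN
    linarith
  exact tendsto_atTop_mono' atTop h2
    ((tendsto_natCast_atTop_atTop (R := ℝ)).const_mul_atTop (by linarith))

lemma tendsto_sq_nat_atTop : Tendsto (fun N : ℕ => (N : ℝ) ^ 2) atTop atTop := by
  simpa [sq] using
    (tendsto_natCast_atTop_atTop (R := ℝ)).atTop_mul_atTop₀ (tendsto_natCast_atTop_atTop (R := ℝ))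

lemma tendsto_exp_zero_of_div_sq {f : ℕ → ℝ} {L : ℝ}
    (hf : Tendsto (fun N : ℕ => f N / (N : ℝ) ^ 2) atTop (nhds L)) (hL : L < 0) :
    Tendsto (fun N => Real.exp (f N)) atTop (nhds 0) := by
  have h1 : ∀ᶠ N : ℕ in atTop, f N / (N : ℝ) ^ 2 < L / 2 :=
    hf.eventually (gt_mem_nhds (by linarith))
  have h2 : ∀ᶠ N : ℕ in atTop, f N ≤ (L / 2) * (N : ℝ) ^ 2 := by
    filter_upwards [h1, eventually_ge_atTop 1] with N hN hN1
    have hNpos : (0:ℝ) < (N : ℝ) ^ 2 := by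
      have : (0:ℝ) < N := by exact_mod_cast hN1
      positivity
    rw [div_lt_iff₀ hNpos] at hN
    linarith
  have h3 : Tendsto (fun N : ℕ => (L / 2) * (N : ℝ) ^ 2) atTop atBot :=
    tendsto_sq_nat_atTop.const_mul_atTop_of_neg (by linarith)
  exact Real.tendsto_exp_atBot.comp (tendsto_atBot_mono' atTop h2 h3)

lemma tendsto_exp_neg_sq_zero {u : ℕ → ℝ} (hu : Tendsto u atTop atTop) :
    Tendsto (fun N => Real.exp (-(u N) ^ 2 / 2)) atTop (nhds 0) := by
  have h1 : Tendsto (fun N => (u N) ^ 2) atTop atTop := by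
    simpa [sq] using hu.atTop_mul_atTop₀ hu
  have h2 : Tendsto (fun N => -(u N) ^ 2 / 2) atTop atBot := by
    have := h1.const_mul_atTop_of_neg (r := -(1/2 : ℝ)) (by norm_num)
    refine this.congr fun N => by ring
  exact Real.tendsto_exp_atBot.comp h2



/-- Last case of Proposition S2: for `p ≥ 0` and `-A₂/B₁² > max(p, 1)`,
`J_p(A_N, B_N) ≈ e^{f_N(1)}` at leading order. -/
theorem Jint_asymptotics_last (p A₂ B₁ : ℝ) (hp : 0 ≤ p) (A B : ℕ → ℝ)
    (hA : Tendsto (fun N : ℕ => A N / (N : ℝ) ^ 2) atTop (nhds A₂))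
    (hB : Tendsto (fun N : ℕ => B N / (N : ℝ)) atTop (nhds B₁))
    (hB₁ : 0 < B₁) (h1 : -A₂ / B₁ ^ 2 > max p 1) :
    Tendsto (fun N : ℕ => Jint p (A N) (B N) * Real.exp (-(fExp (A N) (B N) 1)))
      atTop (nhds 1) := by
  have hB₁0 : B₁ ≠ 0 := ne_of_gt hB₁
  set c : ℝ := -A₂ / B₁ ^ 2 with hcdef
  have hc1 : 1 < c := lt_of_le_of_lt (le_max_right p 1) h1
  have hcp : p < c := lt_of_le_of_lt (le_max_left p 1) h1
  have hA2 : A₂ = -c * B₁ ^ 2 := by rw [hcdef]; field_simp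
  set d : ℝ := (min c (p + 2) - p) / 2 with hddef
  have hd : 0 < d := by
    have := lt_min hcp (show p < p + 2 by linarith)
    rw [hddef]; linarith
  have hkc : p + d < c := by
    have h := min_le_left c (p + 2)
    rw [hddef]; linarith
  -- positivity of B N eventually
  have ev_pos : ∀ᶠ N : ℕ in atTop, 0 < B N := by
    have h1' : ∀ᶠ N : ℕ in atTop, B₁ / 2 < B N / N :=
      hB.eventually (lt_mem_nhds (by linarith))
    filter_upwards [h1', eventually_ge_atTop 1] with N hN hN1
    have hNpos : (0:ℝ) < N := by exact_mod_cast hN1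
    have hq : 0 < B N / N := lt_trans (half_pos hB₁) hN
    rcases div_pos_iff.1 hq with ⟨h, _⟩ | ⟨_, h2⟩
    · exact h
    · linarith
  -- limit of T N / N where T N = -A N / B N
  have hTn : Tendsto (fun N : ℕ => (-A N / B N) / N) atTop (nhds (c * B₁)) := by
    have h0 : Tendsto (fun N : ℕ => (-(A N / (N:ℝ)^2)) / (B N / N)) atTop
        (nhds (-A₂ / B₁)) := hA.neg.div hB hB₁0
    have hval : -A₂ / B₁ = c * B₁ := by rw [hcdef]; field_simp
    rw [hval] at h0
    refine h0.congr' ?_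
    filter_upwards [eventually_ge_atTop 1] with N hN1
    have hN0 : (N:ℝ) ≠ 0 := by positivity
    rcases eq_or_ne (B N) 0 with h | h
    · simp [h]
    · field_simp
  -- u1 = T - B tends to infinity
  have hu1n : Tendsto (fun N : ℕ => (-A N / B N - 1 * B N) / N) atTop
      (nhds ((c - 1) * B₁)) := by
    have h0 := hTn.sub hB
    have hval : c * B₁ - B₁ = (c - 1) * B₁ := by ring
    rw [← hval]
    refine h0.congr fun N => by rw [← sub_div]; ring_nf
  have hu1 : Tendsto (fun N : ℕ => -A N / B N - 1 * B N) atTop atTop :=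
    tendsto_atTop_of_div_nat hu1n (mul_pos (by linarith) hB₁)
  have ev_T1 : ∀ᶠ N : ℕ in atTop, 1 ≤ -A N / B N - 1 * B N := hu1.eventually_ge_atTop 1
  have hε1 : Tendsto (fun N : ℕ => Real.exp (-(-A N / B N - 1 * B N) ^ 2 / 2)) atTop
      (nhds 0) := tendsto_exp_neg_sq_zero hu1
  -- uk = T - (p+d) B tends to infinity
  have hukn : Tendsto (fun N : ℕ => (-A N / B N - (p + d) * B N) / N) atTop
      (nhds ((c - (p + d)) * B₁)) := by
    have h0 := hTn.sub (hB.const_mul (p + d))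
    have hval : c * B₁ - (p + d) * B₁ = (c - (p + d)) * B₁ := by ring
    rw [← hval]
    refine h0.congr fun N => by rw [sub_div, mul_div_assoc]
  have huk : Tendsto (fun N : ℕ => -A N / B N - (p + d) * B N) atTop atTop :=
    tendsto_atTop_of_div_nat hukn (mul_pos (by linarith) hB₁)
  have ev_Tk : ∀ᶠ N : ℕ in atTop, 1 ≤ -A N / B N - (p + d) * B N := huk.eventually_ge_atTop 1
  -- f1 / N² limit
  have hf1n : Tendsto (fun N : ℕ => fExp (A N) (B N) 1 / (N:ℝ)^2) atTop
      (nhds (A₂ + B₁ ^ 2 / 2)) := by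
    have h0 : Tendsto (fun N : ℕ => A N / (N:ℝ)^2 + (B N / N) ^ 2 / 2) atTop
        (nhds (A₂ + B₁ ^ 2 / 2)) := hA.add (((hB.pow 2)).div_const 2)
    refine h0.congr fun N => ?_
    unfold fExp
    rw [div_pow]
    ring
  -- ε3 = exp(-T²/2 - f1) → 0
  have hg3n : Tendsto (fun N : ℕ =>
      (-(-A N / B N) ^ 2 / 2 - fExp (A N) (B N) 1) / (N:ℝ)^2) atTop
      (nhds (-(c * B₁) ^ 2 / 2 - (A₂ + B₁ ^ 2 / 2))) := by
    have h0 : Tendsto (fun N : ℕ =>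
        -((-A N / B N) / N) ^ 2 / 2 - fExp (A N) (B N) 1 / (N:ℝ)^2) atTop
        (nhds (-(c * B₁) ^ 2 / 2 - (A₂ + B₁ ^ 2 / 2))) :=
      (((hTn.pow 2).neg.div_const 2)).sub hf1n
    refine h0.congr fun N => ?_
    rw [div_pow, sub_div]
    ring
  have hg3L : -(c * B₁) ^ 2 / 2 - (A₂ + B₁ ^ 2 / 2) < 0 := by
    rw [hA2]
    nlinarith [mul_pos (mul_pos hB₁ hB₁) (pow_pos (show (0:ℝ) < c - 1 by linarith) 2)]
  have hε3 : Tendsto (fun N : ℕ =>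
      Real.exp (-(-A N / B N) ^ 2 / 2 - fExp (A N) (B N) 1)) atTop (nhds 0) :=
    tendsto_exp_zero_of_div_sq hg3n hg3L
  -- W = e^{f2} G(T-2B) e^{-f1} → 0
  have hW : Tendsto (fun N : ℕ => Real.exp (fExp (A N) (B N) 2) *
      G (-A N / B N - 2 * B N) * Real.exp (-(fExp (A N) (B N) 1))) atTop (nhds 0) := by
    rcases le_or_gt c (3/2) with hc32 | hc32
    · -- c ≤ 3/2 < 2 : use Gaussian tail, W ≤ ε3
      have hu2n : Tendsto (fun N : ℕ => (2 * B N - (-A N / B N)) / N) atTop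
          (nhds ((2 - c) * B₁)) := by
        have h0 := (hB.const_mul 2).sub hTn
        have hval : 2 * B₁ - c * B₁ = (2 - c) * B₁ := by ring
        rw [← hval]
        refine h0.congr fun N => by rw [sub_div, mul_div_assoc]
      have hu2 : Tendsto (fun N : ℕ => 2 * B N - (-A N / B N)) atTop atTop :=
        tendsto_atTop_of_div_nat hu2n (mul_pos (by linarith) hB₁)
      have ev_T2 : ∀ᶠ N : ℕ in atTop, -A N / B N - 2 * B N ≤ -1 := by
        filter_upwards [hu2.eventually_ge_atTop 1] with N hN; linarith
      refine squeeze_zero' ?_ ?_ hε3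
      · filter_upwards with N
        have := G_nonneg (-A N / B N - 2 * B N)
        positivity
      · filter_upwards [ev_T2, ev_pos] with N hN hb
        have hbT : B N * (-A N / B N) = -A N := by field_simp
        have htail := gauss_tail_Iic hN
        have hkey := exp_tail_eq 2 (A N) (B N) (-A N / B N) hbT
        calc Real.exp (fExp (A N) (B N) 2) * G (-A N / B N - 2 * B N) *
              Real.exp (-(fExp (A N) (B N) 1))
            ≤ Real.exp (fExp (A N) (B N) 2) *
              Real.exp (-(-A N / B N - 2 * B N) ^ 2 / 2) *
              Real.exp (-(fExp (A N) (B N) 1)) := by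
              exact mul_le_mul_of_nonneg_right
                (mul_le_mul_of_nonneg_left htail (Real.exp_nonneg _)) (Real.exp_nonneg _)
          _ = Real.exp (-(-A N / B N) ^ 2 / 2) * Real.exp (-(fExp (A N) (B N) 1)) := by
              rw [hkey]
          _ = Real.exp (-(-A N / B N) ^ 2 / 2 - fExp (A N) (B N) 1) := by
              rw [← Real.exp_add]; ring_nf
    · -- c > 3/2 : use e^{f2 - f1} → 0
      have hf2n : Tendsto (fun N : ℕ => (fExp (A N) (B N) 2 - fExp (A N) (B N) 1) / (N:ℝ)^2)
          atTop (nhds (A₂ + 3 * B₁ ^ 2 / 2)) := by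
        have h0 : Tendsto (fun N : ℕ => A N / (N:ℝ)^2 + 3 * (B N / N) ^ 2 / 2) atTop
            (nhds (A₂ + 3 * B₁ ^ 2 / 2)) :=
          hA.add (((hB.pow 2).const_mul 3).div_const 2)
        refine h0.congr fun N => ?_
        unfold fExp
        rw [div_pow, sub_div]
        ring
      have hL : A₂ + 3 * B₁ ^ 2 / 2 < 0 := by
        rw [hA2]
        nlinarith [mul_pos (mul_pos hB₁ hB₁) (show (0:ℝ) < c - 3/2 by linarith)]
      have hexp := tendsto_exp_zero_of_div_sq hf2n hL
      refine squeeze_zero' ?_ ?_ hexp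
      · filter_upwards with N
        have := G_nonneg (-A N / B N - 2 * B N)
        positivity
      · filter_upwards with N
        have hG := G_le_one (-A N / B N - 2 * B N)
        have hG0 := G_nonneg (-A N / B N - 2 * B N)
        calc Real.exp (fExp (A N) (B N) 2) * G (-A N / B N - 2 * B N) *
              Real.exp (-(fExp (A N) (B N) 1))
            ≤ Real.exp (fExp (A N) (B N) 2) * 1 * Real.exp (-(fExp (A N) (B N) 1)) := by
              gcongr
          _ = Real.exp (fExp (A N) (B N) 2 - fExp (A N) (B N) 1) := by
              rw [mul_one, ← Real.exp_add]; ring_nf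
  -- assemble
  set Cd : ℝ := Real.exp (p * Real.log 2) * (Real.log 2 + 1 / d) with hCddef
  have hCd0 : 0 ≤ Cd := by
    have : (0:ℝ) ≤ Real.log 2 := Real.log_nonneg (by norm_num)
    rw [hCddef]; positivity
  have hup : ∀ᶠ N : ℕ in atTop,
      Jint p (A N) (B N) * Real.exp (-(fExp (A N) (B N) 1)) ≤
        1 + (p * Real.exp p) * (Real.exp (fExp (A N) (B N) 2) * G (-A N / B N - 2 * B N) *
          Real.exp (-(fExp (A N) (B N) 1)))
        + Cd * Real.exp (-(-A N / B N) ^ 2 / 2 - fExp (A N) (B N) 1) := by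
    filter_upwards [ev_pos, ev_Tk] with N hb hTk
    have hJ := Jint_le_main p (A N) (B N) d hp hd hb hTk
    have hE : Real.exp (fExp (A N) (B N) 1) * Real.exp (-(fExp (A N) (B N) 1)) = 1 := by
      rw [← Real.exp_add]; simp
    have hE3 : Real.exp (-(-A N / B N) ^ 2 / 2) * Real.exp (-(fExp (A N) (B N) 1)) =
        Real.exp (-(-A N / B N) ^ 2 / 2 - fExp (A N) (B N) 1) := by
      rw [← Real.exp_add]; ring_nf
    have hmul := mul_le_mul_of_nonneg_right hJ (Real.exp_nonneg (-(fExp (A N) (B N) 1)))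
    calc Jint p (A N) (B N) * Real.exp (-(fExp (A N) (B N) 1)) ≤ _ := hmul
      _ = Real.exp (fExp (A N) (B N) 1) * Real.exp (-(fExp (A N) (B N) 1))
          + (p * Real.exp p) * (Real.exp (fExp (A N) (B N) 2) * G (-A N / B N - 2 * B N) *
            Real.exp (-(fExp (A N) (B N) 1)))
          + Cd * (Real.exp (-(-A N / B N) ^ 2 / 2) * Real.exp (-(fExp (A N) (B N) 1))) := by
          ring
      _ = _ := by rw [hE, hE3]
  have hlo : ∀ᶠ N : ℕ in atTop,
      (1 - Real.exp (-(-A N / B N - 1 * B N) ^ 2 / 2))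
        - Real.exp (fExp (A N) (B N) 2) * G (-A N / B N - 2 * B N) *
          Real.exp (-(fExp (A N) (B N) 1)) ≤
      Jint p (A N) (B N) * Real.exp (-(fExp (A N) (B N) 1)) := by
    filter_upwards [ev_pos, ev_T1] with N hb hT1
    have hJ := Jint_ge_main p (A N) (B N) hp hb
    have hGge := G_ge hT1
    have hE : Real.exp (fExp (A N) (B N) 1) * Real.exp (-(fExp (A N) (B N) 1)) = 1 := by
      rw [← Real.exp_add]; simp
    have step1 : Real.exp (fExp (A N) (B N) 1) *
        (1 - Real.exp (-(-A N / B N - 1 * B N) ^ 2 / 2))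
        - Real.exp (fExp (A N) (B N) 2) * G (-A N / B N - 2 * B N) ≤ Jint p (A N) (B N) := by
      refine le_trans ?_ hJ
      have := mul_le_mul_of_nonneg_left hGge (Real.exp_nonneg (fExp (A N) (B N) 1))
      linarith
    have hmul := mul_le_mul_of_nonneg_right step1 (Real.exp_nonneg (-(fExp (A N) (B N) 1)))
    calc (1 - Real.exp (-(-A N / B N - 1 * B N) ^ 2 / 2))
          - Real.exp (fExp (A N) (B N) 2) * G (-A N / B N - 2 * B N) *
            Real.exp (-(fExp (A N) (B N) 1))
        = (Real.exp (fExp (A N) (B N) 1) *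
            (1 - Real.exp (-(-A N / B N - 1 * B N) ^ 2 / 2))
            - Real.exp (fExp (A N) (B N) 2) * G (-A N / B N - 2 * B N)) *
            Real.exp (-(fExp (A N) (B N) 1)) := by
          rw [sub_mul, mul_assoc, mul_comm (Real.exp (fExp (A N) (B N) 1)), mul_assoc, hE]
          ring
      _ ≤ _ := hmul
  have hlower : Tendsto (fun N : ℕ =>
      (1 - Real.exp (-(-A N / B N - 1 * B N) ^ 2 / 2))
        - Real.exp (fExp (A N) (B N) 2) * G (-A N / B N - 2 * B N) *
          Real.exp (-(fExp (A N) (B N) 1))) atTop (nhds 1) := by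
    have h0 := (tendsto_const_nhds (x := (1:ℝ)) (f := atTop (α := ℕ))).sub hε1 |>.sub hW
    simpa only [sub_zero] using h0
  have hupper : Tendsto (fun N : ℕ =>
      1 + (p * Real.exp p) * (Real.exp (fExp (A N) (B N) 2) * G (-A N / B N - 2 * B N) *
        Real.exp (-(fExp (A N) (B N) 1)))
      + Cd * Real.exp (-(-A N / B N) ^ 2 / 2 - fExp (A N) (B N) 1)) atTop (nhds 1) := by
    have h0 := ((tendsto_const_nhds (x := (1:ℝ)) (f := atTop (α := ℕ))).add
      (hW.const_mul (p * Real.exp p))).add (hε3.const_mul Cd)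
    simpa only [mul_zero, add_zero] using h0
  exact tendsto_of_tendsto_of_tendsto_of_le_of_le' hlower hupper hlo hup

end Auxiliary
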